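/- Let w : [c, d] → ℝ be twice continuously differentiable with w(r) ≥ 0, w'(c) = 0, and ε²·(w''(r) + ((N−1)/r)·w'(r)) ≥ m·w(r) on (c, d) for constants ε > 0, m > 0, N ≥ 1, 0 < c < d. If additionally w'(r₀) = 0 for some r₀ ∈ (c, d), then ∫_c^{r₀} r^{N−1}·w(r) dr ≤ 0, hence w ≡ 0 on [c, r₀]. -/

import Mathlib

open MeasureTheory Set intervalIntegral

theorem stmt_18 (c d r₀ ε m N : ℝ) (hc : 0 < c) (hcd : c < d) (hε : 0 < ε)
    (hm : 0 < m) (hN : 1 ≤ N) (hr₀ : r₀ ∈ Set.Ioo c d)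
    (w w' w'' : ℝ → ℝ)
    (hw' : ∀ r ∈ Set.Icc c d, HasDerivAt w (w' r) r)
    (hw'' : ∀ r ∈ Set.Icc c d, HasDerivAt w' (w'' r) r)
    (hw''cont : ContinuousOn w'' (Set.Icc c d))
    (hwpos : ∀ r ∈ Set.Icc c d, 0 ≤ w r)
    (hw'c : w' c = 0) (hw'r₀ : w' r₀ = 0)
    (hineq : ∀ r ∈ Set.Ioo c d,
      m * w r ≤ ε ^ 2 * (w'' r + (N - 1) / r * w' r)) :
    (∫ r in c..r₀, r ^ (N - 1) * w r) ≤ 0 ∧ ∀ r ∈ Set.Icc c r₀, w r = 0 := by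
  obtain ⟨hcr₀, hr₀d⟩ := hr₀
  have hsub : Icc c r₀ ⊆ Icc c d := Icc_subset_Icc le_rfl hr₀d.le
  have hposIcc : ∀ x ∈ Icc c r₀, 0 < x := fun x hx => lt_of_lt_of_le hc hx.1
  have hwc : ContinuousOn w (Icc c d) := fun x hx =>
    (hw' x hx).continuousAt.continuousWithinAt
  have hw'cont : ContinuousOn w' (Icc c d) := fun x hx =>
    (hw'' x hx).continuousAt.continuousWithinAt
  have hrpow1 : ContinuousOn (fun r : ℝ => r ^ (N - 1)) (Icc c r₀) := fun x hx =>
    (Real.continuousAt_rpow_const x _ (Or.inl (hposIcc x hx).ne')).continuousWithinAt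
  have hrpow2 : ContinuousOn (fun r : ℝ => r ^ (N - 2)) (Icc c r₀) := fun x hx =>
    (Real.continuousAt_rpow_const x _ (Or.inl (hposIcc x hx).ne')).continuousWithinAt
  set f : ℝ → ℝ := fun r => r ^ (N - 1) * w r with hfdef
  have hfcont : ContinuousOn f (Icc c r₀) := hrpow1.mul (hwc.mono hsub)
  have hfint : IntervalIntegrable f volume c r₀ := hfcont.intervalIntegrable_of_Icc hcr₀.le
  set g : ℝ → ℝ := fun r => r ^ (N - 1) * w' r with hgdef
  set g' : ℝ → ℝ := fun r => (N - 1) * r ^ (N - 2) * w' r + r ^ (N - 1) * w'' r with hg'def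
  have hg : ∀ x ∈ Icc c r₀, HasDerivAt g (g' x) x := by
    intro x hx
    have hx0 : x ≠ 0 := (hposIcc x hx).ne'
    have h1 : HasDerivAt (fun r : ℝ => r ^ (N - 1)) ((N - 1) * x ^ (N - 1 - 1)) x :=
      Real.hasDerivAt_rpow_const (Or.inl hx0)
    have h2 := h1.mul (hw'' x (hsub hx))
    rw [show N - 1 - 1 = N - 2 by ring] at h2
    exact h2
  have hg'cont : ContinuousOn g' (Icc c r₀) :=
    ((continuousOn_const.mul hrpow2).mul (hw'cont.mono hsub)).add
      (hrpow1.mul (hw''cont.mono hsub))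
  have hg'int : IntervalIntegrable g' volume c r₀ := hg'cont.intervalIntegrable_of_Icc hcr₀.le
  have hint0 : (∫ r in c..r₀, g' r) = 0 := by
    rw [integral_eq_sub_of_hasDerivAt (fun x hx => hg x (by rwa [uIcc_of_le hcr₀.le] at hx))
      hg'int]
    simp [hgdef, hw'c, hw'r₀]
  have key : ∀ x ∈ Ioc c r₀, m * f x ≤ ε ^ 2 * g' x := by
    intro x hx
    have hxpos : 0 < x := hc.trans hx.1
    have h := hineq x ⟨hx.1, lt_of_le_of_lt hx.2 hr₀d⟩
    have hpow : (0:ℝ) < x ^ (N - 1) := Real.rpow_pos_of_pos hxpos _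
    have hmm := mul_le_mul_of_nonneg_left h hpow.le
    have hx2 : x ^ (N - 2) = x ^ (N - 1) / x := by
      rw [show N - 2 = N - 1 - 1 by ring, Real.rpow_sub_one hxpos.ne']
    calc m * f x = x ^ (N - 1) * (m * w x) := by simp [hfdef]; ring
      _ ≤ x ^ (N - 1) * (ε ^ 2 * (w'' x + (N - 1) / x * w' x)) := hmm
      _ = ε ^ 2 * g' x := by
          simp only [hg'def, hx2]
          field_simp
          ring
  have hae : (fun x => m * f x) ≤ᵐ[volume.restrict (Icc c r₀)] fun x => ε ^ 2 * g' x := by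
    have h1 : ∀ᵐ x ∂(volume.restrict (Icc c r₀)), x ∈ Icc c r₀ :=
      ae_restrict_mem measurableSet_Icc
    have h2 : ∀ᵐ x ∂(volume.restrict (Icc c r₀)), x ≠ c :=
      ae_restrict_of_ae (by simp [ae_iff, (by ext x; simp : {x : ℝ | ¬ x ≠ c} = {c})])
    filter_upwards [h1, h2] with x hx hx2
    exact key x ⟨lt_of_le_of_ne hx.1 (Ne.symm hx2), hx.2⟩
  have hmono := integral_mono_ae_restrict hcr₀.le (hfint.const_mul m)
      (hg'int.const_mul (ε ^ 2)) hae
  rw [intervalIntegral.integral_const_mul, intervalIntegral.integral_const_mul, hint0, mul_zero] at hmono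
  have hintle : (∫ r in c..r₀, f r) ≤ 0 := by
    nlinarith [hmono]
  refine ⟨hintle, ?_⟩
  have hfnonneg : ∀ x ∈ Icc c r₀, 0 ≤ f x := fun x hx =>
    mul_nonneg (Real.rpow_pos_of_pos (hposIcc x hx) _).le (hwpos x (hsub hx))
  intro r hr
  by_contra hne
  have hwr : 0 < w r := lt_of_le_of_ne (hwpos r (hsub hr)) (Ne.symm hne)
  have hfr : 0 < f r := mul_pos (Real.rpow_pos_of_pos (hposIcc r hr) _) hwr
  obtain ⟨δ, hδ, hball⟩ := Metric.continuousWithinAt_iff.mp (hfcont r hr) (f r / 2)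
    (by positivity)
  set a := max c (r - δ / 2) with hadef
  set b := min r₀ (r + δ / 2) with hbdef
  have har : a ≤ r := max_le hr.1 (by linarith)
  have hrb : r ≤ b := le_min hr.2 (by linarith)
  have hca : c ≤ a := le_max_left _ _
  have hbr₀ : b ≤ r₀ := min_le_left _ _
  have hab : a < b := by
    rcases lt_or_eq_of_le hr.2 with h | h
    · exact lt_of_le_of_lt har (lt_min h (by linarith))
    · exact lt_of_lt_of_le (max_lt (h ▸ hcr₀) (by linarith [h])) hrb
  have hIcc : Icc a b ⊆ Icc c r₀ := Icc_subset_Icc hca hbr₀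
  have hlow : ∀ x ∈ Icc a b, f r / 2 ≤ f x := by
    intro x hx
    have hx' := hIcc hx
    have hd : dist x r < δ := by
      rw [Real.dist_eq, abs_lt]
      have h1 : r - δ / 2 ≤ x := le_trans (le_max_right _ _) hx.1
      have h2 : x ≤ r + δ / 2 := le_trans hx.2 (min_le_right _ _)
      constructor <;> linarith
    have := hball hx' hd
    rw [Real.dist_eq, abs_lt] at this
    linarith
  have hfab : IntervalIntegrable f volume a b :=
    hfint.mono_set (by rw [uIcc_of_le hab.le, uIcc_of_le hcr₀.le]; exact hIcc)
  have hf1 : IntervalIntegrable f volume c a :=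
    hfint.mono_set (by
      rw [uIcc_of_le hca, uIcc_of_le hcr₀.le]
      exact Icc_subset_Icc le_rfl (har.trans hr.2))
  have hf2 : IntervalIntegrable f volume b r₀ :=
    hfint.mono_set (by
      rw [uIcc_of_le hbr₀, uIcc_of_le hcr₀.le]
      exact Icc_subset_Icc (hca.trans hab.le) le_rfl)
  have hmid : (b - a) * (f r / 2) ≤ ∫ x in a..b, f x := by
    have h := integral_mono_on hab.le intervalIntegrable_const hfab hlow
    rw [intervalIntegral.integral_const, smul_eq_mul] at h
    linarith
  have hpos1 : 0 ≤ ∫ x in c..a, f x :=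
    integral_nonneg hca (fun x hx => hfnonneg x ⟨hx.1, hx.2.trans (har.trans hr.2)⟩)
  have hpos2 : 0 ≤ ∫ x in b..r₀, f x :=
    integral_nonneg hbr₀ (fun x hx => hfnonneg x ⟨(hca.trans (hab.le.trans hx.1)), hx.2⟩)
  have hsplit : (∫ x in c..a, f x) + (∫ x in a..b, f x) + (∫ x in b..r₀, f x)
      = ∫ x in c..r₀, f x := by
    rw [integral_add_adjacent_intervals hf1 hfab,
      integral_add_adjacent_intervals (hf1.trans hfab) hf2]
  have : 0 < (b - a) * (f r / 2) := mul_pos (by linarith) (by linarith)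
  linarith
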